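/- arXiv:1307.6375 — 2 statements merged into one kernel-verified Lean document; each statement's English description precedes it below -/
import Mathlib

section
/- (Volume of conic balls centered on the divisor, Lemma 7.2.) For every r > 0 one has μ_β(B(r)) = β_1⋯β_d π^n r^{2n}/n!, i.e. ∫_{B(r)} ∏_{k=1}^d |z_k|^{2(β_k−1)} dλ(z) = β_1⋯β_d π^n r^{2n}/n!. -/
open MeasureTheory Real Set

noncomputable section

/-- The union of the coordinate hyperplanes `z_k = 0` for `k < d` (the support `Δ` of the
divisor) inside `ℂ^n`. -/
def cDelta (n d : ℕ) : Set (Fin n → ℂ) := {z | ∃ k : Fin n, (k : ℕ) < d ∧ z k = 0}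

/-- The open unit polydisk `D^n ⊆ ℂ^n`. -/
def polydisk (n : ℕ) : Set (Fin n → ℂ) := {z | ∀ k, ‖z k‖ < 1}

/-- The density `∏_{k<d} |z_k|^{2(β_k - 1)}` of the conic volume measure with respect to
Lebesgue measure. -/
def cDensity {n : ℕ} (d : ℕ) (β : Fin n → ℝ) (z : Fin n → ℂ) : ℝ :=
  ∏ k : Fin n, if (k : ℕ) < d then ‖z k‖ ^ (2 * (β k - 1)) else 1

/-- The conic volume measure `μ_β` on `ℂ^n`. -/
def muBeta {n : ℕ} (d : ℕ) (β : Fin n → ℝ) : Measure (Fin n → ℂ) :=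
  MeasureTheory.volume.withDensity fun z => ENNReal.ofReal (cDensity d β z)

/-- First-order directional derivative of `f` at `z` in the direction `v`. -/
def pd {n : ℕ} (v : Fin n → ℂ) (f : (Fin n → ℂ) → ℝ) (z : Fin n → ℂ) : ℝ :=
  fderiv ℝ f z v

/-- Second-order directional derivative of `f` at `z` in the direction `v` (twice). -/
def pd2 {n : ℕ} (v : Fin n → ℂ) (f : (Fin n → ℂ) → ℝ) (z : Fin n → ℂ) : ℝ :=
  fderiv ℝ (fun w => fderiv ℝ f w v) z v

/-- The real coordinate direction `∂/∂x_k`. -/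
def eVec {n : ℕ} (k : Fin n) : Fin n → ℂ := Pi.single k 1

/-- The imaginary coordinate direction `∂/∂y_k`. -/
def iVec {n : ℕ} (k : Fin n) : Fin n → ℂ := Pi.single k Complex.I

/-- The conic Laplacian
`Δ_β f = ∑_{k<d} |z_k|^{2(1-β_k)} (∂²f/∂x_k² + ∂²f/∂y_k²) + ∑_{k≥d} (∂²f/∂x_k² + ∂²f/∂y_k²)`. -/
def cLap {n : ℕ} (d : ℕ) (β : Fin n → ℝ) (f : (Fin n → ℂ) → ℝ) (z : Fin n → ℂ) : ℝ :=
  ∑ k : Fin n, (if (k : ℕ) < d then ‖z k‖ ^ (2 * (1 - β k)) else 1) *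
    (pd2 (eVec k) f z + pd2 (iVec k) f z)

/-- The conic inner product of gradients `⟨∇f, ∇g⟩_β`. -/
def cGradInner {n : ℕ} (d : ℕ) (β : Fin n → ℝ) (f g : (Fin n → ℂ) → ℝ) (z : Fin n → ℂ) : ℝ :=
  ∑ k : Fin n, (if (k : ℕ) < d then ‖z k‖ ^ (2 * (1 - β k)) else 1) *
    (pd (eVec k) f z * pd (eVec k) g z + pd (iVec k) f z * pd (iVec k) g z)

/-- The squared conic gradient `|∇f|²_β`. -/
def cGradSq {n : ℕ} (d : ℕ) (β : Fin n → ℝ) (f : (Fin n → ℂ) → ℝ) (z : Fin n → ℂ) : ℝ :=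
  cGradInner d β f f z

/-- The open conic ball of radius `r` centered at the origin:
`B(r) = {z : ∑_{k<d} (|z_k|^{β_k}/β_k)² + ∑_{k≥d} |z_k|² < r²}`. -/
def cBall {n : ℕ} (d : ℕ) (β : Fin n → ℝ) (r : ℝ) : Set (Fin n → ℂ) :=
  {z | (∑ k : Fin n, if (k : ℕ) < d then (‖z k‖ ^ (β k) / β k) ^ 2
        else ‖z k‖ ^ 2) < r ^ 2}

/-- The closed conic ball of radius `r` centered at the origin. -/
def cBallClosed {n : ℕ} (d : ℕ) (β : Fin n → ℝ) (r : ℝ) : Set (Fin n → ℂ) :=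
  {z | (∑ k : Fin n, if (k : ℕ) < d then (‖z k‖ ^ (β k) / β k) ^ 2
        else ‖z k‖ ^ 2) ≤ r ^ 2}

/-- The conic volume `V(r) = β_1 ⋯ β_d π^n r^{2n} / n!` of the conic ball of radius `r`. -/
def cVol {n : ℕ} (d : ℕ) (β : Fin n → ℝ) (r : ℝ) : ℝ :=
  (∏ k : Fin n, if (k : ℕ) < d then β k else 1) * Real.pi ^ n * r ^ (2 * n) / (n.factorial : ℝ)

lemma det_pi_complex {n : ℕ} (f : Fin n → (ℂ →ₗ[ℝ] ℂ)) :
    LinearMap.det (LinearMap.pi fun k => (f k) ∘ₗ LinearMap.proj k) = ∏ k, LinearMap.det (f k) := by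
  classical
  let b : Module.Basis ((_ : Fin n) × Fin 2) ℝ (Fin n → ℂ) := Pi.basis fun _ => Complex.basisOneI
  have hM : LinearMap.toMatrix b b (LinearMap.pi fun k => (f k) ∘ₗ LinearMap.proj k) =
      Matrix.blockDiagonal' (fun k => LinearMap.toMatrix Complex.basisOneI Complex.basisOneI (f k)) := by
    ext ⟨k, i⟩ ⟨k', i'⟩
    rw [LinearMap.toMatrix_apply, Matrix.blockDiagonal'_apply]
    rw [Pi.basis_repr]
    rcases eq_or_ne k k' with rfl | hkk
    · simp [b, Pi.basis_apply, LinearMap.toMatrix_apply]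
    · simp [b, Pi.basis_apply, hkk, Ne.symm hkk]
  rw [← LinearMap.det_toMatrix b, hM,
    ← Matrix.det_submatrix_equiv_self
      ((Equiv.prodComm (Fin 2) (Fin n)).trans (Equiv.sigmaEquivProd (Fin n) (Fin 2)).symm)]
  rw [show ⇑((Equiv.prodComm (Fin 2) (Fin n)).trans (Equiv.sigmaEquivProd (Fin n) (Fin 2)).symm)
      = (Prod.toSigma ∘ Prod.swap : Fin 2 × Fin n → (_ : Fin n) × Fin 2) from rfl,
    Matrix.blockDiagonal'_submatrix_eq_blockDiagonal, Matrix.det_blockDiagonal]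
  simp [LinearMap.det_toMatrix]

/-- derivative of `Complex.normSq`. -/
def qd (z : ℂ) : ℂ →L[ℝ] ℝ := (2*z.re) • Complex.reCLM + (2*z.im) • Complex.imCLM

lemma hasFDerivAt_normSq (z : ℂ) : HasFDerivAt Complex.normSq (qd z) z := by
  have h1 : HasFDerivAt (fun z : ℂ => z.re) Complex.reCLM z := Complex.reCLM.hasFDerivAt
  have h2 : HasFDerivAt (fun z : ℂ => z.im) Complex.imCLM z := Complex.imCLM.hasFDerivAt
  have h := (h1.mul h1).add (h2.mul h2)
  have hf : ⇑Complex.normSq = fun z : ℂ => z.re*z.re + z.im*z.im := by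
    funext w; exact Complex.normSq_apply w
  rw [hf]
  refine h.congr_fderiv (Eq.symm ?_)
  unfold qd
  ext w
  simp [two_smul]
  ring

def cf (b : ℝ) (z : ℂ) : ℝ := b⁻¹ * Complex.normSq z ^ ((b-1)/2)

def fct (b : ℝ) (z : ℂ) : ℂ := cf b z • z

def Lmap (b : ℝ) (z : ℂ) : ℂ →L[ℝ] ℂ :=
  cf b z • ContinuousLinearMap.id ℝ ℂ +
    ((b⁻¹ * ((b-1)/2 * Complex.normSq z ^ ((b-1)/2 - 1))) • qd z).smulRight z

lemma hasFDerivAt_cf (b : ℝ) (z : ℂ) (hz : z ≠ 0) :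
    HasFDerivAt (cf b) ((b⁻¹ * ((b-1)/2 * Complex.normSq z ^ ((b-1)/2 - 1))) • qd z) z := by
  have hq0 : Complex.normSq z ≠ 0 := by
    simpa [Complex.normSq_eq_zero] using hz
  have h := ((Real.hasDerivAt_rpow_const (x := Complex.normSq z) (p := (b-1)/2)
    (Or.inl hq0)).comp_hasFDerivAt z (hasFDerivAt_normSq z)).const_mul b⁻¹
  refine h.congr_fderiv (Eq.symm ?_)
  rw [smul_smul]

lemma hasFDerivAt_fct (b : ℝ) (z : ℂ) (hz : z ≠ 0) : HasFDerivAt (fct b) (Lmap b z) z :=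
  (hasFDerivAt_cf b z hz).smul (hasFDerivAt_id z)

lemma det_Lmap (b : ℝ) (hb : 0 < b) (z : ℂ) (hz : z ≠ 0) :
    (Lmap b z).det = Complex.normSq z ^ (b-1) / b := by
  have hq : 0 < Complex.normSq z := Complex.normSq_pos.mpr hz
  show LinearMap.det _ = _
  rw [← LinearMap.det_toMatrix Complex.basisOneI, Matrix.det_fin_two]
  simp [LinearMap.toMatrix_apply, Complex.coe_basisOneI_repr, Complex.coe_basisOneI,
    Lmap, cf, qd, Complex.real_smul, Complex.mul_re, Complex.mul_im]
  have hx2 : z.re*z.re + z.im*z.im = Complex.normSq z := (Complex.normSq_apply z).symm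
  have hYX : Complex.normSq z ^ ((b-1)/2 - 1) * Complex.normSq z = Complex.normSq z ^ ((b-1)/2) := by
    rw [← Real.rpow_add_one hq.ne']; ring_nf
  have hXX : Complex.normSq z ^ ((b-1)/2) * Complex.normSq z ^ ((b-1)/2) = Complex.normSq z ^ (b-1) := by
    rw [← Real.rpow_add hq]; ring_nf
  linear_combination (b⁻¹*b⁻¹*(b-1)*(Complex.normSq z ^ ((b-1)/2))*(Complex.normSq z ^ ((b-1)/2-1)))*hx2
    + (b⁻¹*b⁻¹*(b-1)*(Complex.normSq z ^ ((b-1)/2)))*hYX + b⁻¹*hXX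
    + (b⁻¹*(Complex.normSq z ^ ((b-1)/2))*(Complex.normSq z ^ ((b-1)/2)))*(mul_inv_cancel₀ hb.ne')

lemma normSq_rpow (z : ℂ) (c : ℝ) : Complex.normSq z ^ c = ‖z‖ ^ (2*c) := by
  rw [← Complex.sq_norm, ← Real.rpow_natCast (‖z‖) 2,
    ← Real.rpow_mul (norm_nonneg z)]
  norm_num

lemma abs_fct (b : ℝ) (hb : 0 < b) (z : ℂ) :
    ‖fct b z‖ = ‖z‖ ^ b / b := by
  rcases eq_or_ne z 0 with rfl | hz
  · simp [fct, Real.zero_rpow hb.ne']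
  · have h1 : ‖z‖ ≠ 0 := by simpa using hz
    unfold fct cf
    rw [norm_smul, Real.norm_eq_abs,
      abs_of_nonneg (mul_nonneg (inv_nonneg.mpr hb.le)
        (Real.rpow_nonneg (Complex.normSq_nonneg z) _)), normSq_rpow,
      show 2*((b-1)/2) = b - 1 by ring, mul_assoc, ← Real.rpow_add_one h1,
      show b - 1 + 1 = b by ring, inv_mul_eq_div]

def gct (b : ℝ) (w : ℂ) : ℂ := ((b * ‖w‖) ^ (1/b) / ‖w‖) • w

lemma abs_gct (b : ℝ) (hb : 0 < b) (w : ℂ) (hw : w ≠ 0) :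
    ‖gct b w‖ = (b * ‖w‖) ^ (1/b) := by
  have h1 : (0:ℝ) < ‖w‖ := norm_pos_iff.mpr hw
  unfold gct
  rw [norm_smul, Real.norm_eq_abs,
    abs_of_nonneg (div_nonneg (Real.rpow_nonneg (by positivity) _) h1.le), div_mul_cancel₀]
  exact h1.ne'

lemma fct_gct (b : ℝ) (hb : 0 < b) (w : ℂ) (hw : w ≠ 0) : fct b (gct b w) = w := by
  have h1 : (0:ℝ) < ‖w‖ := norm_pos_iff.mpr hw
  have hbw : (0:ℝ) < b * ‖w‖ := by positivity
  have hgq : Complex.normSq (gct b w) ^ ((b-1)/2) = (b*‖w‖)^((b-1)/b) := by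
    rw [normSq_rpow, abs_gct b hb w hw, ← Real.rpow_mul hbw.le]
    congr 1
    field_simp
  show (b⁻¹ * Complex.normSq (gct b w) ^ ((b-1)/2)) • gct b w = w
  rw [hgq]
  show _ • (((b * ‖w‖) ^ (1/b) / ‖w‖) • w) = w
  rw [smul_smul]
  have hPQ : (b*‖w‖)^((b-1)/b) * (b*‖w‖)^(1/b) = b * ‖w‖ := by
    rw [← Real.rpow_add hbw, show (b-1)/b + 1/b = 1 by field_simp; ring]
    exact Real.rpow_one _
  have hcoef : b⁻¹ * (b*‖w‖)^((b-1)/b) * ((b * ‖w‖) ^ (1/b) / ‖w‖) = 1 := by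
    field_simp
    exact hPQ
  rw [hcoef, one_smul]

lemma gct_fct (b : ℝ) (hb : 0 < b) (z : ℂ) (hz : z ≠ 0) : gct b (fct b z) = z := by
  have h1 : (0:ℝ) < ‖z‖ := norm_pos_iff.mpr hz
  have h2 : (b * ‖fct b z‖)^(1/b) = ‖z‖ := by
    rw [abs_fct b hb z, mul_div_cancel₀ _ hb.ne', ← Real.rpow_mul h1.le,
      mul_one_div_cancel hb.ne', Real.rpow_one]
  show ((b * ‖fct b z‖) ^ (1/b) / ‖fct b z‖) • fct b z = z
  rw [h2, abs_fct b hb z]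
  show _ • ((b⁻¹ * Complex.normSq z ^ ((b-1)/2)) • z) = z
  rw [smul_smul, normSq_rpow, show 2*((b-1)/2) = b - 1 by ring]
  have h3 : ‖z‖ * ‖z‖ ^ (b-1) = ‖z‖ ^ b := by
    nth_rewrite 1 [← Real.rpow_one (‖z‖)]
    rw [← Real.rpow_add h1]
    ring_nf
  have hzb : (0:ℝ) < ‖z‖ ^ b := Real.rpow_pos_of_pos h1 b
  have hcoef : ‖z‖ / (‖z‖ ^ b / b) * (b⁻¹ * ‖z‖ ^ (b-1)) = 1 := by
    field_simp
    linear_combination h3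
  rw [hcoef, one_smul]

section Main

variable {n d : ℕ} (β : Fin n → ℝ)

/-- the coordinatewise straightening map -/
def Fmap (d : ℕ) (β : Fin n → ℝ) (z : Fin n → ℂ) : Fin n → ℂ :=
  fun k => if (k:ℕ) < d then fct (β k) (z k) else z k

def Fder (d : ℕ) (β : Fin n → ℝ) (z : Fin n → ℂ) : (Fin n → ℂ) →L[ℝ] (Fin n → ℂ) :=
  ContinuousLinearMap.pi fun k =>
    (if (k:ℕ) < d then Lmap (β k) (z k) else ContinuousLinearMap.id ℝ ℂ).comp
      (ContinuousLinearMap.proj k)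

def Sgood (n d : ℕ) : Set (Fin n → ℂ) := {z : Fin n → ℂ | ∀ k : Fin n, (k:ℕ) < d → z k ≠ 0}

lemma measurableSet_Sgood : MeasurableSet (Sgood n d) := by
  have : Sgood n d = ⋂ k : Fin n, {z : Fin n → ℂ | (k:ℕ) < d → z k ≠ 0} := by
    ext z; simp [Sgood]
  rw [this]
  refine MeasurableSet.iInter fun k => ?_
  by_cases hk : (k:ℕ) < d
  · simp only [hk, forall_true_left]
    have hm : Measurable fun z : Fin n → ℂ => z k := measurable_pi_apply k
    exact (hm (measurableSet_singleton (0:ℂ))).compl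
  · simp only [hk, false_implies]
    exact MeasurableSet.univ.congr (by ext z; simp)

lemma volume_compl_Sgood : volume (Sgood n d)ᶜ = 0 := by
  have hsub : (Sgood n d)ᶜ ⊆ ⋃ k : Fin n, {z : Fin n → ℂ | z k = 0} := by
    intro z hz
    simp only [Sgood, mem_compl_iff, mem_setOf_eq, not_forall] at hz
    obtain ⟨k, _, hk⟩ := hz
    simp only [not_not] at hk
    exact mem_iUnion.2 ⟨k, hk⟩
  refine measure_mono_null hsub (measure_iUnion_null fun k => ?_)
  have : {z : Fin n → ℂ | z k = 0} = Set.pi univ (fun j => if j = k then {0} else univ) := by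
    ext z
    simp only [mem_setOf_eq, mem_pi, mem_univ, forall_true_left]
    constructor
    · intro h j; by_cases hj : j = k <;> simp [hj, h]
    · intro h; have := h k; simpa using this
  rw [this, volume_pi_pi]
  exact Finset.prod_eq_zero (Finset.mem_univ k) (by simp)

lemma hasFDerivAt_Fmap (hβ : ∀ k : Fin n, (k : ℕ) < d → 0 < β k)
    {z : Fin n → ℂ} (hz : z ∈ Sgood n d) :
    HasFDerivAt (Fmap d β) (Fder d β z) z := by
  apply hasFDerivAt_pi'.2
  intro k
  rw [Fder, ContinuousLinearMap.proj_pi]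
  by_cases hk : (k:ℕ) < d
  · simp only [Fmap, hk, if_true]
    exact (hasFDerivAt_fct (β k) (z k) (hz k hk)).comp z (hasFDerivAt_apply (𝕜 := ℝ) k z)
  · simp only [Fmap, hk, if_false, ContinuousLinearMap.id_comp]
    exact hasFDerivAt_apply k z

lemma det_Fder (hβ : ∀ k : Fin n, (k : ℕ) < d → 0 < β k)
    {z : Fin n → ℂ} (hz : z ∈ Sgood n d) :
    (Fder d β z).det =
      ∏ k : Fin n, if (k:ℕ) < d then Complex.normSq (z k) ^ (β k - 1) / β k else 1 := by
  have hcoe : ((Fder d β z : (Fin n → ℂ) →L[ℝ] (Fin n → ℂ)) : (Fin n → ℂ) →ₗ[ℝ] (Fin n → ℂ)) =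
      LinearMap.pi (fun j : Fin n =>
        LinearMap.comp
          (if (j:ℕ) < d then Lmap (β j) (z j) else ContinuousLinearMap.id ℝ ℂ).toLinearMap
          (LinearMap.proj j)) := by
    apply LinearMap.ext; intro w; rfl
  show LinearMap.det _ = _
  rw [hcoe, det_pi_complex]
  refine Finset.prod_congr rfl fun k _ => ?_
  by_cases hk : (k:ℕ) < d
  · simp only [hk, if_true]
    exact det_Lmap (β k) (hβ k hk) (z k) (hz k hk)
  · simp only [hk, if_false]
    simp

end Main

/-- **Volume of conic balls centered on the divisor** (Lemma 7.2). For every `r > 0` one has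
`μ_β(B(r)) = β_1 ⋯ β_d π^n r^{2n} / n!`. -/
theorem conic_ball_volume (n d : ℕ) (hn : 1 ≤ n) (hd1 : 1 ≤ d) (hdn : d ≤ n)
    (β : Fin n → ℝ) (hβ : ∀ k : Fin n, (k : ℕ) < d → 0 < β k)
    (r : ℝ) (hr : 0 < r) :
    muBeta d β (cBall d β r) = ENNReal.ofReal (cVol d β r) := by
  classical
  have : Nonempty (Fin n) := ⟨⟨0, hn⟩⟩
  have hPnn : (0:ℝ) ≤ ∏ k : Fin n, if (k : ℕ) < d then β k else 1 :=
    Finset.prod_nonneg fun k _ => by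
      by_cases hk : (k:ℕ) < d
      · simpa [hk] using (hβ k hk).le
      · simp [hk]
  have hmeas_ball : MeasurableSet (cBall d β r) := by
    have hg : Measurable fun z : Fin n → ℂ =>
        (∑ k : Fin n, if (k:ℕ) < d then (‖z k‖ ^ (β k) / β k) ^ 2
          else ‖z k‖ ^ 2) := by
      apply Finset.measurable_sum
      intro k _
      have habs : Measurable fun z : Fin n → ℂ => ‖z k‖ :=
        continuous_norm.measurable.comp (measurable_pi_apply k)
      by_cases hk : (k:ℕ) < d
      · simp only [hk, if_true]
        exact ((((Real.continuous_rpow_const (hβ k hk).le).measurable.comp habs).div_const _).pow_const 2)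
      · simp only [hk, if_false]
        exact habs.pow_const 2
    exact hg measurableSet_Iio
  have hmeasS : MeasurableSet (Sgood n d ∩ cBall d β r) :=
    measurableSet_Sgood.inter hmeas_ball
  show (volume.withDensity fun z => ENNReal.ofReal (cDensity d β z)) (cBall d β r) = _
  rw [withDensity_apply _ hmeas_ball]
  -- restrict to the good set
  have hae : (cBall d β r : Set (Fin n → ℂ)) =ᵐ[(volume : Measure (Fin n → ℂ))]
      ((Sgood n d ∩ cBall d β r : Set (Fin n → ℂ))) := by
    rw [ae_eq_set]
    constructor
    · refine measure_mono_null (fun z hz => ?_) (volume_compl_Sgood (n := n) (d := d))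
      intro hS
      exact hz.2 ⟨hS, hz.1⟩
    · rw [Set.diff_eq_empty.mpr inter_subset_right]
      exact measure_empty
  rw [setLIntegral_congr hae]
  -- pointwise identification of the density with the Jacobian
  have hP : ∀ z ∈ Sgood n d ∩ cBall d β r,
      ENNReal.ofReal (cDensity d β z) =
        ENNReal.ofReal (∏ k : Fin n, if (k : ℕ) < d then β k else 1) *
          ENNReal.ofReal |(Fder d β z).det| := by
    intro z hz
    have hQnn : (0:ℝ) ≤ ∏ k : Fin n,
        if (k:ℕ) < d then Complex.normSq (z k) ^ (β k - 1) / β k else 1 :=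
      Finset.prod_nonneg fun k _ => by
        by_cases hk : (k:ℕ) < d
        · simp only [hk, if_true]
          exact div_nonneg (Real.rpow_nonneg (Complex.normSq_nonneg _) _) (hβ k hk).le
        · simp [hk]
    have hsplit : cDensity d β z = (∏ k : Fin n, if (k : ℕ) < d then β k else 1) *
        ∏ k : Fin n, if (k:ℕ) < d then Complex.normSq (z k) ^ (β k - 1) / β k else 1 := by
      unfold cDensity
      rw [← Finset.prod_mul_distrib]
      refine Finset.prod_congr rfl fun k _ => ?_
      by_cases hk : (k:ℕ) < d
      · simp only [hk, if_true]
        rw [normSq_rpow]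
        have hb := (hβ k hk).ne'
        field_simp
      · simp [hk]
    rw [hsplit, ENNReal.ofReal_mul hPnn, det_Fder β hβ hz.1, abs_of_nonneg hQnn]
  rw [setLIntegral_congr_fun hmeasS hP,
    lintegral_const_mul' _ _ ENNReal.ofReal_ne_top]
  -- change of variables
  have hinj : InjOn (Fmap d β) (Sgood n d ∩ cBall d β r) := by
    intro z hz z' hz' h
    funext k
    by_cases hk : (k:ℕ) < d
    · have hco := congrFun h k
      simp only [Fmap, hk, if_true] at hco
      have hco2 := congrArg (gct (β k)) hco
      rwa [gct_fct _ (hβ k hk) _ (hz.1 k hk), gct_fct _ (hβ k hk) _ (hz'.1 k hk)] at hco2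
    · have hco := congrFun h k
      simpa [Fmap, hk] using hco
  have hder : ∀ z ∈ Sgood n d ∩ cBall d β r,
      HasFDerivWithinAt (Fmap d β) (Fder d β z) (Sgood n d ∩ cBall d β r) z :=
    fun z hz => (hasFDerivAt_Fmap β hβ hz.1).hasFDerivWithinAt
  rw [lintegral_abs_det_fderiv_eq_addHaar_image volume hmeasS hder hinj]
  -- identify the image
  have hsum : ∀ z : Fin n → ℂ,
      (∑ k : Fin n, ‖Fmap d β z k‖ ^ 2) =
        ∑ k : Fin n, if (k:ℕ) < d then (‖z k‖ ^ (β k) / β k) ^ 2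
          else ‖z k‖ ^ 2 := by
    intro z
    refine Finset.sum_congr rfl fun k _ => ?_
    by_cases hk : (k:ℕ) < d
    · simp only [Fmap, hk, if_true, abs_fct (β k) (hβ k hk) (z k)]
    · simp [Fmap, hk]
  have himg : Fmap d β '' (Sgood n d ∩ cBall d β r) =
      Sgood n d ∩ {w : Fin n → ℂ | (∑ k : Fin n, ‖w k‖ ^ 2) < r ^ 2} := by
    apply Subset.antisymm
    · rintro _ ⟨z, ⟨hzS, hzB⟩, rfl⟩
      refine ⟨?_, ?_⟩
      · intro k hk
        simp only [Fmap, hk, if_true]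
        intro h0
        have hpos : (0:ℝ) < ‖z k‖ ^ (β k) / β k :=
          div_pos (Real.rpow_pos_of_pos (norm_pos_iff.mpr (hzS k hk)) _) (hβ k hk)
        rw [← abs_fct (β k) (hβ k hk) (z k), h0] at hpos
        simp at hpos
      · show _ < r^2
        rw [hsum z]
        exact hzB
    · rintro w ⟨hwS, hwB⟩
      set z : Fin n → ℂ := fun k => if (k:ℕ) < d then gct (β k) (w k) else w k with hzdef
      have hzS : z ∈ Sgood n d := by
        intro k hk
        simp only [hzdef, hk, if_true]
        intro h0
        have habs := abs_gct (β k) (hβ k hk) (w k) (hwS k hk)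
        rw [h0] at habs
        have hpos : (0:ℝ) < (β k * ‖w k‖) ^ ((1:ℝ)/(β k)) :=
          Real.rpow_pos_of_pos (mul_pos (hβ k hk) (norm_pos_iff.mpr (hwS k hk))) _
        rw [← habs] at hpos
        simp at hpos
      have hFz : Fmap d β z = w := by
        funext k
        by_cases hk : (k:ℕ) < d
        · simp only [Fmap, hzdef, hk, if_true]
          exact fct_gct (β k) (hβ k hk) (w k) (hwS k hk)
        · simp [Fmap, hzdef, hk]
      refine ⟨z, ⟨hzS, ?_⟩, hFz⟩
      show (∑ k : Fin n, if (k:ℕ) < d then (‖z k‖ ^ (β k) / β k) ^ 2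
          else ‖z k‖ ^ 2) < r ^ 2
      rw [← hsum z, hFz]
      exact hwB
  rw [himg]
  -- volume of the round ball
  have haeB : ((Sgood n d ∩ {w : Fin n → ℂ | (∑ k : Fin n, ‖w k‖ ^ 2) < r ^ 2} :
        Set (Fin n → ℂ)))
      =ᵐ[(volume : Measure (Fin n → ℂ))]
      ({w : Fin n → ℂ | (∑ k : Fin n, ‖w k‖ ^ 2) < r ^ 2} : Set (Fin n → ℂ)) := by
    rw [ae_eq_set]
    constructor
    · rw [Set.diff_eq_empty.mpr inter_subset_right]
      exact measure_empty
    · refine measure_mono_null (fun w hw => ?_) (volume_compl_Sgood (n := n) (d := d))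
      exact fun hS => hw.2 ⟨hS, hw.1⟩
  rw [measure_congr haeB]
  have hvol : volume {w : Fin n → ℂ | (∑ k : Fin n, ‖w k‖ ^ 2) < r ^ 2} =
      ENNReal.ofReal r ^ (2*n) * ENNReal.ofReal (π ^ n / (n.factorial : ℝ)) := by
    have hset : {w : Fin n → ℂ | (∑ k : Fin n, ‖w k‖ ^ 2) < r ^ 2} =
        {x : Fin n → ℂ | (∑ i, ‖x i‖ ^ (2:ℝ)) ^ ((1:ℝ)/2) < r} := by
      ext w
      simp only [mem_setOf_eq]
      have hterm : ∀ i : Fin n, ‖w i‖ ^ (2:ℝ) = ‖w i‖ ^ 2 := fun i => by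
        rw [show (2:ℝ) = ((2:ℕ):ℝ) by norm_num, Real.rpow_natCast]
      simp_rw [hterm]
      rw [← Real.sqrt_eq_rpow, Real.sqrt_lt' hr]
    rw [hset, Complex.volume_sum_rpow_lt (ι := Fin n) one_le_two r]
    congr 1
    · rw [Fintype.card_fin]
    · rw [Fintype.card_fin]
      rw [show (2:ℝ)/2 + 1 = 2 by norm_num, Real.Gamma_two,
        show 2*(n:ℝ)/2 + 1 = (n:ℝ) + 1 by ring, Real.Gamma_nat_eq_factorial]
      norm_num
  rw [hvol]
  -- final arithmetic
  rw [← ENNReal.ofReal_pow hr.le, ← ENNReal.ofReal_mul (by positivity),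
    ← ENNReal.ofReal_mul hPnn]
  congr 1
  unfold cVol
  ring
end
end

section
/- (The polar stretching map transforms Lebesgue measure into the conic volume measure, key computation behind Lemma 7.1, Lemma 7.2 and Proposition 7.3.) Define Ψ : ℂ^n → ℂ^n by Ψ(z)_k := β_k^{1/(2β_k)} |z_k|^{1/β_k − 1} z_k for 1 ≤ k ≤ d (with Ψ(z)_k := 0 when z_k = 0) and Ψ(z)_k := z_k for d < k ≤ n. Then Ψ restricts to a bijection of ℂ^n∖Δ onto itself, and the pushforward under Ψ of the Lebesgue measure λ restricted to ℂ^n∖Δ equals the measure μ_β restricted to ℂ^n∖Δ; equivalently, for every measurable function g : ℂ^n → [0, ∞], ∫_{ℂ^n∖Δ} g(Ψ(z)) dλ(z) = ∫_{ℂ^n∖Δ} g(w) dμ_β(w). -/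
open MeasureTheory Real Set

noncomputable section

/-- The polar stretching map `Ψ : ℂ^n → ℂ^n`,
`Ψ(z)_k = β_k^{1/(2β_k)} |z_k|^{1/β_k - 1} z_k` for `k < d` and `Ψ(z)_k = z_k` otherwise. -/
def psiMap {n : ℕ} (d : ℕ) (β : Fin n → ℝ) (z : Fin n → ℂ) : Fin n → ℂ :=
  fun k =>
    if (k : ℕ) < d then
      (((β k ^ (1 / (2 * β k)) * ‖z k‖ ^ (1 / β k - 1)) : ℝ) : ℂ) * z k
    else z k

namespace PsiAux


/-- The planar stretching map. -/
def psi1 (b : ℝ) (z : ℂ) : ℂ :=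
  (((b ^ (1 / (2 * b)) * ‖z‖ ^ (1 / b - 1)) : ℝ) : ℂ) * z

/-- The planar inverse map. -/
def psi1inv (b : ℝ) (w : ℂ) : ℂ :=
  (((b ^ (-(2 : ℝ)⁻¹) * ‖w‖ ^ (b - 1)) : ℝ) : ℂ) * w

lemma psi1_zero (b : ℝ) : psi1 b 0 = 0 := by simp [psi1]

lemma psi1inv_zero (b : ℝ) : psi1inv b 0 = 0 := by simp [psi1inv]

lemma psi1_one (z : ℂ) : psi1 1 z = z := by
  simp [psi1]

lemma abs_psi1 {b : ℝ} (hb : 0 < b) (z : ℂ) :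
    ‖psi1 b z‖ = b ^ (1 / (2 * b)) * ‖z‖ ^ (1 / b) := by
  rcases eq_or_ne z 0 with rfl | hz
  · simp only [psi1, norm_zero, mul_zero, norm_mul]
    rw [Real.zero_rpow (by positivity : (1 : ℝ) / b ≠ 0), mul_zero]
  · have hr : 0 < ‖z‖ := by simpa using hz
    rw [psi1, norm_mul, Complex.norm_real, Real.norm_eq_abs, abs_of_nonneg (by positivity)]
    rw [mul_assoc, ← Real.rpow_add_one hr.ne']
    norm_num

lemma abs_psi1inv {b : ℝ} (hb : 0 < b) (w : ℂ) (hw : w ≠ 0) :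
    ‖psi1inv b w‖ = b ^ (-(2 : ℝ)⁻¹) * ‖w‖ ^ b := by
  have hr : 0 < ‖w‖ := by simpa using hw
  rw [psi1inv, norm_mul, Complex.norm_real, Real.norm_eq_abs, abs_of_nonneg (by positivity)]
  rw [mul_assoc, ← Real.rpow_add_one hr.ne']
  norm_num

lemma psi1_ne_zero {b : ℝ} (hb : 0 < b) {z : ℂ} (hz : z ≠ 0) : psi1 b z ≠ 0 := by
  have hr : 0 < ‖z‖ := by simpa using hz
  have : 0 < ‖psi1 b z‖ := by
    rw [abs_psi1 hb]; positivity
  simpa using this.ne'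

lemma psi1inv_ne_zero {b : ℝ} (hb : 0 < b) {w : ℂ} (hw : w ≠ 0) : psi1inv b w ≠ 0 := by
  have hr : 0 < ‖w‖ := by simpa using hw
  have : 0 < ‖psi1inv b w‖ := by
    rw [abs_psi1inv hb w hw]; positivity
  simpa using this.ne'

lemma psi1inv_psi1 {b : ℝ} (hb : 0 < b) (z : ℂ) : psi1inv b (psi1 b z) = z := by
  rcases eq_or_ne z 0 with rfl | hz
  · rw [psi1_zero, psi1inv_zero]
  · have hr : 0 < ‖z‖ := by simpa using hz
    rw [psi1inv, abs_psi1 hb]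
    show (((b ^ (-(2:ℝ)⁻¹) * (b ^ (1/(2*b)) * ‖z‖ ^ (1/b)) ^ (b - 1)) : ℝ) : ℂ) *
      ((((b ^ (1/(2*b)) * ‖z‖ ^ (1/b - 1)) : ℝ) : ℂ) * z) = z
    rw [← mul_assoc, ← Complex.ofReal_mul]
    have hS : b ^ (-(2:ℝ)⁻¹) * (b ^ (1/(2*b)) * ‖z‖ ^ (1/b)) ^ (b - 1) *
        (b ^ (1/(2*b)) * ‖z‖ ^ (1/b - 1)) = 1 := by
      rw [Real.mul_rpow (by positivity) (by positivity), ← Real.rpow_mul hb.le,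
        ← Real.rpow_mul hr.le]
      simp only [Real.rpow_def_of_pos hb, Real.rpow_def_of_pos hr, ← Real.exp_add]
      rw [Real.exp_eq_one_iff]
      field_simp
      ring
    rw [hS]
    simp

lemma psi1_psi1inv {b : ℝ} (hb : 0 < b) (w : ℂ) : psi1 b (psi1inv b w) = w := by
  rcases eq_or_ne w 0 with rfl | hw
  · rw [psi1inv_zero, psi1_zero]
  · have hr : 0 < ‖w‖ := by simpa using hw
    rw [psi1, abs_psi1inv hb w hw]
    show (((b ^ (1/(2*b)) * (b ^ (-(2:ℝ)⁻¹) * ‖w‖ ^ b) ^ (1/b - 1)) : ℝ) : ℂ) *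
      ((((b ^ (-(2:ℝ)⁻¹) * ‖w‖ ^ (b - 1)) : ℝ) : ℂ) * w) = w
    rw [← mul_assoc, ← Complex.ofReal_mul]
    have hS : b ^ (1/(2*b)) * (b ^ (-(2:ℝ)⁻¹) * ‖w‖ ^ b) ^ (1/b - 1) *
        (b ^ (-(2:ℝ)⁻¹) * ‖w‖ ^ (b - 1)) = 1 := by
      rw [Real.mul_rpow (by positivity) (by positivity), ← Real.rpow_mul hb.le,
        ← Real.rpow_mul hr.le]
      simp only [Real.rpow_def_of_pos hb, Real.rpow_def_of_pos hr, ← Real.exp_add]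
      rw [Real.exp_eq_one_iff]
      field_simp
      ring
    rw [hS]
    simp

end PsiAux

namespace PsiAux2


def nCLM (z : ℂ) : ℂ →L[ℝ] ℝ :=
  (z.re • Complex.reCLM + z.re • Complex.reCLM) + (z.im • Complex.imCLM + z.im • Complex.imCLM)

lemma hasFDerivAt_normSq (z : ℂ) :
    HasFDerivAt (fun w : ℂ => Complex.normSq w) (nCLM z) z := by
  have h1 := (Complex.reCLM.hasFDerivAt (x := z)).mul (Complex.reCLM.hasFDerivAt (x := z))
  have h2 := (Complex.imCLM.hasFDerivAt (x := z)).mul (Complex.imCLM.hasFDerivAt (x := z))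
  have h := h1.add h2
  have hfun : (fun w : ℂ => Complex.reCLM w * Complex.reCLM w + Complex.imCLM w * Complex.imCLM w)
      = fun w : ℂ => Complex.normSq w := by
    funext w; simp [Complex.normSq_apply]
  rw [← hfun]
  exact h

def Lmap (b : ℝ) (z : ℂ) : ℂ →L[ℝ] ℂ :=
  (b ^ (1 / (2 * b)) * Complex.normSq z ^ ((1 / b - 1) / 2)) • ContinuousLinearMap.id ℝ ℂ +
  (b ^ (1 / (2 * b)) •
    (((1 / b - 1) / 2 * Complex.normSq z ^ ((1 / b - 1) / 2 - 1)) • nCLM z)).smulRight z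

lemma psi1_eq (b : ℝ) :
    (fun z => ((((b : ℝ) ^ (1 / (2 * b)) * ‖z‖ ^ (1 / b - 1)) : ℝ) : ℂ) * z)
      = fun z : ℂ => (b ^ (1 / (2 * b)) * Complex.normSq z ^ ((1 / b - 1) / 2)) • z := by
  funext z
  rw [Complex.real_smul]
  congr 3
  rw [Complex.norm_def, Real.sqrt_eq_rpow, ← Real.rpow_mul (Complex.normSq_nonneg z)]
  congr 1
  ring

lemma hasFDerivAt_psi1 (b : ℝ) {z : ℂ} (hz : z ≠ 0) :
    HasFDerivAt (fun w => ((((b : ℝ) ^ (1 / (2 * b)) * ‖w‖ ^ (1 / b - 1)) : ℝ) : ℂ) * w)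
      (Lmap b z) z := by
  have hρ : Complex.normSq z ≠ 0 := by
    simpa [Complex.normSq_eq_zero] using hz
  have hrp : HasDerivAt (fun x : ℝ => x ^ ((1 / b - 1) / 2))
      (((1 / b - 1) / 2) * Complex.normSq z ^ ((1 / b - 1) / 2 - 1)) (Complex.normSq z) :=
    Real.hasDerivAt_rpow_const (Or.inl hρ)
  have h1 : HasFDerivAt (fun w : ℂ => Complex.normSq w ^ ((1 / b - 1) / 2))
      ((((1 / b - 1) / 2) * Complex.normSq z ^ ((1 / b - 1) / 2 - 1)) • nCLM z) z :=
    hrp.comp_hasFDerivAt z (hasFDerivAt_normSq z)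
  have h2 := h1.const_mul (b ^ (1 / (2 * b)))
  have h3 := h2.smul (hasFDerivAt_id z)
  rw [psi1_eq b]
  exact h3

/-- Determinant of a block-diagonal continuous linear map on `ℂⁿ`. -/
lemma det_pi_clm {n : ℕ} (T : Fin n → (ℂ →L[ℝ] ℂ)) :
    (ContinuousLinearMap.pi fun k => (T k).comp (ContinuousLinearMap.proj k)).det
      = ∏ k, (T k).det := by
  classical
  have hcoe : ((ContinuousLinearMap.pi fun k => (T k).comp (ContinuousLinearMap.proj k)
        : (Fin n → ℂ) →L[ℝ] (Fin n → ℂ)) : (Fin n → ℂ) →ₗ[ℝ] (Fin n → ℂ))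
      = LinearMap.pi (fun k => ((T k : ℂ →ₗ[ℝ] ℂ)).comp (LinearMap.proj k)) := rfl
  show LinearMap.det _ = _
  rw [hcoe]
  set bas := Pi.basis (fun _ : Fin n => Complex.basisOneI) with hbas
  rw [← LinearMap.det_toMatrix bas]
  set e : ((_ : Fin n) × Fin 2) ≃ Fin 2 × Fin n :=
    (Equiv.sigmaEquivProd (Fin n) (Fin 2)).trans (Equiv.prodComm _ _) with he
  rw [← Matrix.det_reindex_self e]
  have hmat : (Matrix.reindex e e)
        ((LinearMap.toMatrix bas bas)
          (LinearMap.pi fun k => ((T k : ℂ →ₗ[ℝ] ℂ)).comp (LinearMap.proj k)))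
      = Matrix.blockDiagonal
          (fun k => LinearMap.toMatrix Complex.basisOneI Complex.basisOneI (T k : ℂ →ₗ[ℝ] ℂ)) := by
    ext ⟨p, k⟩ ⟨q, j⟩
    rw [Matrix.reindex_apply, Matrix.submatrix_apply, Matrix.blockDiagonal_apply]
    have hesymm : ∀ pk : Fin 2 × Fin n, e.symm pk = ⟨pk.2, pk.1⟩ := fun _ => rfl
    rw [hesymm, hesymm]
    rw [LinearMap.toMatrix_apply, LinearMap.toMatrix_apply]
    rw [hbas, Pi.basis_apply]
    rcases eq_or_ne k j with rfl | hkj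
    · rw [Pi.basis_repr]
      simp only [LinearMap.pi_apply, LinearMap.comp_apply, LinearMap.proj_apply]
      rw [Pi.single_eq_same]
      simp
    · simp only [if_neg hkj]
      rw [Pi.basis_repr]
      simp only [LinearMap.pi_apply, LinearMap.comp_apply, LinearMap.proj_apply]
      rw [Pi.single_eq_of_ne hkj, map_zero]
      simp
  rw [hmat, Matrix.det_blockDiagonal]
  exact Finset.prod_congr rfl fun k _ => LinearMap.det_toMatrix _ _

lemma det_Lmap {b : ℝ} (hb : 0 < b) {z : ℂ} (hz : z ≠ 0) :
    (Lmap b z).det = b⁻¹ * b ^ (1 / b) * Complex.normSq z ^ (1 / b - 1) := by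
  rw [show (Lmap b z).det
      = ((LinearMap.toMatrix Complex.basisOneI Complex.basisOneI) (Lmap b z : ℂ →ₗ[ℝ] ℂ)).det
      from (LinearMap.det_toMatrix _ _).symm, Matrix.det_fin_two]
  simp only [LinearMap.toMatrix_apply, ContinuousLinearMap.coe_coe, Complex.coe_basisOneI,
    Matrix.cons_val_zero, Matrix.cons_val_one, Matrix.head_cons, Lmap, nCLM,
    ContinuousLinearMap.add_apply, ContinuousLinearMap.smul_apply,
    ContinuousLinearMap.smulRight_apply, ContinuousLinearMap.id_apply,
    ContinuousLinearMap.coe_smul', Pi.smul_apply, Complex.reCLM_apply, Complex.imCLM_apply,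
    Complex.coe_basisOneI_repr, Complex.add_re, Complex.add_im, Complex.smul_re, Complex.smul_im,
    Complex.one_re, Complex.one_im, Complex.I_re, Complex.I_im, smul_eq_mul]
  have hρ : 0 < Complex.normSq z := Complex.normSq_pos.2 hz
  have hx : z.re * z.re + z.im * z.im = Complex.normSq z := (Complex.normSq_apply z).symm
  have hvw : Complex.normSq z ^ ((1 / b - 1) / 2 - 1) * Complex.normSq z
      = Complex.normSq z ^ ((1 / b - 1) / 2) := by
    rw [← Real.rpow_add_one hρ.ne' ((1 / b - 1) / 2 - 1), sub_add_cancel]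
  have hcc : b ^ (1 / (2 * b)) * b ^ (1 / (2 * b)) = b ^ (1 / b) := by
    rw [← Real.rpow_add hb]; congr 1; field_simp; norm_num
  have hvv : Complex.normSq z ^ ((1 / b - 1) / 2) * Complex.normSq z ^ ((1 / b - 1) / 2)
      = Complex.normSq z ^ (1 / b - 1) := by
    rw [← Real.rpow_add hρ]; congr 1; ring
  linear_combination
    ((b⁻¹ - 1) * (b ^ (1 / (2 * b)) * b ^ (1 / (2 * b))) *
      (Complex.normSq z ^ ((1 / b - 1) / 2) * Complex.normSq z ^ ((1 / b - 1) / 2 - 1))) * hx +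
    ((b⁻¹ - 1) * (b ^ (1 / (2 * b)) * b ^ (1 / (2 * b))) *
      Complex.normSq z ^ ((1 / b - 1) / 2)) * hvw +
    (b⁻¹ * (Complex.normSq z ^ ((1 / b - 1) / 2) * Complex.normSq z ^ ((1 / b - 1) / 2))) * hcc +
    (b⁻¹ * b ^ (1 / b)) * hvv


lemma det_id_clm : (ContinuousLinearMap.id ℝ ℂ).det = 1 := by
  show LinearMap.det _ = 1
  rw [ContinuousLinearMap.coe_id, LinearMap.det_id]

lemma key_cancel {b r : ℝ} (hb : 0 < b) (hr : 0 < r) :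
    b⁻¹ * b ^ (1 / b) * r ^ (2 * (1 / b - 1)) *
      ((b ^ (1 / (2 * b)) * r ^ (1 / b)) ^ (2 * (b - 1))) = 1 := by
  rw [Real.mul_rpow (by positivity) (by positivity), ← Real.rpow_mul hb.le,
    ← Real.rpow_mul hr.le, ← Real.rpow_neg_one b]
  simp only [Real.rpow_def_of_pos hb, Real.rpow_def_of_pos hr, ← Real.exp_add]
  rw [Real.exp_eq_one_iff]
  field_simp
  ring

end PsiAux2

/-- **The polar stretching map transforms Lebesgue measure into the conic volume measure**
(key computation behind Lemma 7.1, Lemma 7.2 and Proposition 7.3). `Ψ` restricts to a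
bijection of `ℂ^n ∖ Δ` onto itself and pushes the Lebesgue measure on `ℂ^n ∖ Δ` forward to
`μ_β` on `ℂ^n ∖ Δ`: for every measurable `g : ℂ^n → [0,∞]`,
`∫_{ℂ^n∖Δ} g(Ψ(z)) dλ(z) = ∫_{ℂ^n∖Δ} g dμ_β`. -/
theorem psiMap_pushforward (n d : ℕ) (hn : 1 ≤ n) (hd1 : 1 ≤ d) (hdn : d ≤ n)
    (β : Fin n → ℝ) (hβ : ∀ k : Fin n, (k : ℕ) < d → 0 < β k) :
    Set.BijOn (psiMap d β) (cDelta n d)ᶜ (cDelta n d)ᶜ ∧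
    ∀ g : (Fin n → ℂ) → ENNReal, Measurable g →
      ∫⁻ z in (cDelta n d)ᶜ, g (psiMap d β z) ∂(MeasureTheory.volume) =
        ∫⁻ w in (cDelta n d)ᶜ, g w ∂(muBeta d β) := by
  classical
  have hmem : ∀ z : Fin n → ℂ, z ∈ (cDelta n d)ᶜ ↔ ∀ k : Fin n, (k : ℕ) < d → z k ≠ 0 := by
    intro z
    simp only [Set.mem_compl_iff, cDelta, Set.mem_setOf_eq, not_exists, not_and]
  have hsm : MeasurableSet (cDelta n d)ᶜ := by
    apply MeasurableSet.compl
    have hD : cDelta n d = ⋃ k : Fin n, ⋃ _h : (k : ℕ) < d, {z : Fin n → ℂ | z k = 0} := by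
      ext z; simp [cDelta]
    rw [hD]
    exact MeasurableSet.iUnion fun k => MeasurableSet.iUnion fun _ =>
      (measurable_pi_apply k) (measurableSet_singleton 0)
  have hΨeq : ∀ (z : Fin n → ℂ) (k : Fin n), (k : ℕ) < d →
      psiMap d β z k = PsiAux.psi1 (β k) (z k) := by
    intro z k hk
    simp only [psiMap, if_pos hk, PsiAux.psi1]
  have hΨeq' : ∀ (z : Fin n → ℂ) (k : Fin n), ¬ (k : ℕ) < d → psiMap d β z k = z k := by
    intro z k hk
    simp only [psiMap, if_neg hk]
  set Φ : (Fin n → ℂ) → (Fin n → ℂ) :=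
    fun w k => if (k : ℕ) < d then PsiAux.psi1inv (β k) (w k) else w k with hΦ
  have hleft : ∀ z : Fin n → ℂ, Φ (psiMap d β z) = z := by
    intro z; funext k
    by_cases hk : (k : ℕ) < d
    · simp only [hΦ, if_pos hk, hΨeq z k hk, PsiAux.psi1inv_psi1 (hβ k hk)]
    · simp only [hΦ, if_neg hk, hΨeq' z k hk]
  have hright : ∀ w : Fin n → ℂ, psiMap d β (Φ w) = w := by
    intro w; funext k
    by_cases hk : (k : ℕ) < d
    · rw [hΨeq _ k hk]
      simp only [hΦ, if_pos hk]
      exact PsiAux.psi1_psi1inv (hβ k hk) (w k)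
    · rw [hΨeq' _ k hk]
      simp only [hΦ, if_neg hk]
  have hmaps : Set.MapsTo (psiMap d β) (cDelta n d)ᶜ (cDelta n d)ᶜ := by
    intro z hz
    rw [hmem]
    intro k hk
    rw [hΨeq z k hk]
    exact PsiAux.psi1_ne_zero (hβ k hk) ((hmem z).1 hz k hk)
  have hinj : Set.InjOn (psiMap d β) (cDelta n d)ᶜ := by
    intro z1 _ z2 _ h
    rw [← hleft z1, ← hleft z2, h]
  have hsurj : Set.SurjOn (psiMap d β) (cDelta n d)ᶜ (cDelta n d)ᶜ := by
    intro w hw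
    refine ⟨Φ w, ?_, hright w⟩
    rw [hmem]
    intro k hk
    simp only [hΦ, if_pos hk]
    exact PsiAux.psi1inv_ne_zero (hβ k hk) ((hmem w).1 hw k hk)
  have hbij : Set.BijOn (psiMap d β) (cDelta n d)ᶜ (cDelta n d)ᶜ := ⟨hmaps, hinj, hsurj⟩
  refine ⟨hbij, ?_⟩
  intro g hg
  set F' : (Fin n → ℂ) → ((Fin n → ℂ) →L[ℝ] (Fin n → ℂ)) := fun z =>
    ContinuousLinearMap.pi (fun k =>
      (if (k : ℕ) < d then PsiAux2.Lmap (β k) (z k) else ContinuousLinearMap.id ℝ ℂ).comp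
        (ContinuousLinearMap.proj k)) with hF'
  have hder : ∀ z ∈ (cDelta n d)ᶜ, HasFDerivWithinAt (psiMap d β) (F' z) (cDelta n d)ᶜ z := by
    intro z hz
    apply HasFDerivAt.hasFDerivWithinAt
    rw [hF']
    apply hasFDerivAt_pi.2
    intro k
    by_cases hk : (k : ℕ) < d
    · have hzk : z k ≠ 0 := (hmem z).1 hz k hk
      have hcomp := (PsiAux2.hasFDerivAt_psi1 (β k) hzk).comp z
        (ContinuousLinearMap.proj (R := ℝ) (φ := fun _ : Fin n => ℂ) k).hasFDerivAt
      rw [if_pos hk]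
      have hfun : (fun x : Fin n → ℂ => psiMap d β x k) =
          ((fun w : ℂ => ((((β k : ℝ) ^ (1 / (2 * β k)) *
            ‖w‖ ^ (1 / β k - 1)) : ℝ) : ℂ) * w) ∘ fun x : Fin n → ℂ => x k) := by
        funext x
        exact hΨeq x k hk
      rw [hfun]
      exact hcomp
    · rw [if_neg hk, ContinuousLinearMap.id_comp]
      have hfun : (fun x : Fin n → ℂ => psiMap d β x k) = fun x : Fin n → ℂ => x k := by
        funext x
        exact hΨeq' x k hk
      rw [hfun]
      exact (ContinuousLinearMap.proj (R := ℝ) (φ := fun _ : Fin n => ℂ) k).hasFDerivAt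
  have hdensmeas : Measurable fun w : Fin n → ℂ => ENNReal.ofReal (cDensity d β w) := by
    apply Measurable.ennreal_ofReal
    unfold cDensity
    refine Finset.measurable_prod _ (fun k _ => ?_)
    by_cases hk : (k : ℕ) < d
    · simp only [if_pos hk]
      have hfk : Measurable fun x : Fin n → ℂ => ‖x k‖ :=
        continuous_norm.measurable.comp (measurable_pi_apply k)
      have hp : Measurable fun t : ℝ => t ^ (2 * (β k - 1)) := by fun_prop
      exact hp.comp hfk
    · simp only [if_neg hk]
      fun_prop
  have key := MeasureTheory.lintegral_image_eq_lintegral_abs_det_fderiv_mul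
    (volume : Measure (Fin n → ℂ)) hsm hder hinj
    (fun w => ENNReal.ofReal (cDensity d β w) * g w)
  rw [hbij.image_eq] at key
  have hL : ∫⁻ w in (cDelta n d)ᶜ, g w ∂(muBeta d β)
      = ∫⁻ w in (cDelta n d)ᶜ, ENNReal.ofReal (cDensity d β w) * g w ∂volume := by
    rw [muBeta, MeasureTheory.restrict_withDensity hsm,
      lintegral_withDensity_eq_lintegral_mul _ hdensmeas hg]
    simp_rw [Pi.mul_apply]
  have hR : ∀ z ∈ (cDelta n d)ᶜ,
      ENNReal.ofReal |(F' z).det| * (ENNReal.ofReal (cDensity d β (psiMap d β z)) *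
        g (psiMap d β z)) = g (psiMap d β z) := by
    intro z hz
    have hdet : (F' z).det = ∏ k : Fin n, (if (k : ℕ) < d then
        (β k)⁻¹ * β k ^ (1 / β k) * Complex.normSq (z k) ^ (1 / β k - 1) else 1) := by
      rw [hF', PsiAux2.det_pi_clm]
      refine Finset.prod_congr rfl fun k _ => ?_
      by_cases hk : (k : ℕ) < d
      · rw [if_pos hk, if_pos hk]
        exact PsiAux2.det_Lmap (hβ k hk) ((hmem z).1 hz k hk)
      · rw [if_neg hk, if_neg hk]
        exact PsiAux2.det_id_clm
    have hpos : 0 < ∏ k : Fin n, (if (k : ℕ) < d then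
        (β k)⁻¹ * β k ^ (1 / β k) * Complex.normSq (z k) ^ (1 / β k - 1) else 1) := by
      apply Finset.prod_pos
      intro k _
      by_cases hk : (k : ℕ) < d
      · rw [if_pos hk]
        have hb := hβ k hk
        have hρ : 0 < Complex.normSq (z k) := Complex.normSq_pos.2 ((hmem z).1 hz k hk)
        positivity
      · rw [if_neg hk]; exact one_pos
    have habs : |(F' z).det| = ∏ k : Fin n, (if (k : ℕ) < d then
        (β k)⁻¹ * β k ^ (1 / β k) * Complex.normSq (z k) ^ (1 / β k - 1) else 1) := by
      rw [hdet]; exact abs_of_pos hpos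
    have hcancel : (∏ k : Fin n, (if (k : ℕ) < d then
        (β k)⁻¹ * β k ^ (1 / β k) * Complex.normSq (z k) ^ (1 / β k - 1) else 1)) *
        cDensity d β (psiMap d β z) = 1 := by
      rw [cDensity, ← Finset.prod_mul_distrib]
      apply Finset.prod_eq_one
      intro k _
      by_cases hk : (k : ℕ) < d
      · rw [if_pos hk, if_pos hk]
        have hb := hβ k hk
        have hzk : z k ≠ 0 := (hmem z).1 hz k hk
        have hr : 0 < ‖z k‖ := by simpa using hzk
        rw [hΨeq z k hk, PsiAux.abs_psi1 hb, ← Complex.sq_norm,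
          ← Real.rpow_natCast (‖z k‖) 2,
          ← Real.rpow_mul (norm_nonneg _)]
        have h2 : ((2 : ℕ) : ℝ) * (1 / β k - 1) = 2 * (1 / β k - 1) := by norm_num
        rw [h2]
        exact PsiAux2.key_cancel hb hr
      · rw [if_neg hk, if_neg hk, one_mul]
    rw [← mul_assoc, ← ENNReal.ofReal_mul (abs_nonneg _), habs, hcancel,
      ENNReal.ofReal_one, one_mul]
  rw [MeasureTheory.setLIntegral_congr_fun_ae hsm
    (Filter.Eventually.of_forall hR)] at key
  rw [hL, ← key]
end
end
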